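/- arXiv:2503.02985 — 2 statements merged into one kernel-verified Lean document; each statement's English description precedes it below -/
import Mathlib

section
/- Given the subspace relation X₁ = A X₀ + B U₀ + W₀ and any V with Φ V = [K; I_n] where Φ = D₀D₀ᵀ/t and D₀ = [U₀; X₀], the closed-loop matrix satisfies A + BK = (X̄₁ − W̄₀)V, where X̄₁ = X₁D₀ᵀ/t and W̄₀ = W₀D₀ᵀ/t. -/
open Matrix

/-- Given `X₁ = A X₀ + B U₀ + W₀` and `Φ V = [K; I_n]` with `Φ = D₀D₀ᵀ/t`,
`D₀ = [U₀; X₀]`, the closed-loop matrix satisfies `A + BK = (X̄₁ − W̄₀) V`. -/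
theorem stmt2 {m n t : ℕ} (A : Matrix (Fin n) (Fin n) ℝ) (B : Matrix (Fin n) (Fin m) ℝ)
    (X₀ X₁ W₀ : Matrix (Fin n) (Fin t) ℝ) (U₀ : Matrix (Fin m) (Fin t) ℝ)
    (hdyn : X₁ = A * X₀ + B * U₀ + W₀)
    (D₀ : Matrix (Fin m ⊕ Fin n) (Fin t) ℝ) (hD : D₀ = fromRows U₀ X₀)
    (hrank : D₀.rank = m + n)
    (K : Matrix (Fin m) (Fin n) ℝ) (V : Matrix (Fin m ⊕ Fin n) (Fin n) ℝ)
    (hV : ((1 / (t : ℝ)) • (D₀ * D₀ᵀ)) * V = fromRows K 1) :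
    A + B * K = ((1 / (t : ℝ)) • (X₁ * D₀ᵀ) - (1 / (t : ℝ)) • (W₀ * D₀ᵀ)) * V := by
  have hX : X₁ - W₀ = fromCols B A * D₀ := by
    rw [hdyn, hD, fromCols_mul_fromRows]; abel
  have key : (1 / (t : ℝ)) • (X₁ * D₀ᵀ) - (1 / (t : ℝ)) • (W₀ * D₀ᵀ)
      = fromCols B A * ((1 / (t : ℝ)) • (D₀ * D₀ᵀ)) := by
    rw [Matrix.mul_smul, ← smul_sub, ← Matrix.sub_mul, hX, Matrix.mul_assoc]
  rw [key, Matrix.mul_assoc, hV, fromCols_mul_fromRows, Matrix.mul_one, add_comm]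
end

section
/- Let M ∈ ℝ^{n×n} with ‖M‖ < 1 (operator norm). Then the solution Σ of Σ = I_n + MΣMᵀ satisfies I_n ⪯ Σ ⪯ (1/(1 − ‖M‖²)) I_n. -/
open Matrix
open scoped Matrix.Norms.L2Operator

/-- If `‖M‖ < 1` (operator 2-norm), then the solution
`Σ = ∑_{k≥0} M^k (M^k)ᵀ` of `Σ = I + MΣMᵀ` satisfies `I ⪯ Σ ⪯ (1/(1 − ‖M‖²)) I`. -/
theorem stmt18 {n : ℕ} (M : Matrix (Fin n) (Fin n) ℝ) (hM : ‖M‖ < 1) :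
    ((∑' k : ℕ, M ^ k * (M ^ k)ᵀ) - 1).PosSemidef ∧
    ((1 / (1 - ‖M‖ ^ 2)) • (1 : Matrix (Fin n) (Fin n) ℝ) -
        ∑' k : ℕ, M ^ k * (M ^ k)ᵀ).PosSemidef := by
  have hM0 : (0:ℝ) ≤ ‖M‖ := norm_nonneg M
  have hr1 : ‖M‖ ^ 2 < 1 := by nlinarith
  have hr0 : (0:ℝ) ≤ ‖M‖ ^ 2 := by positivity
  set f : ℕ → Matrix (Fin n) (Fin n) ℝ := fun k => M ^ k * (M ^ k)ᵀ with hf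
  -- norm bound
  have hnormpow : ∀ k, ‖M ^ k‖ ≤ ‖M‖ ^ k := by
    intro k
    rcases Nat.eq_zero_or_pos k with h | h
    · subst h
      rw [pow_zero, pow_zero]
      calc ‖(1 : Matrix (Fin n) (Fin n) ℝ)‖
          = ‖(toEuclideanCLM (n := Fin n) (𝕜 := ℝ) 1)‖ := Matrix.cstar_norm_def 1
        _ = ‖(1 : EuclideanSpace ℝ (Fin n) →L[ℝ] EuclideanSpace ℝ (Fin n))‖ := by
            rw [_root_.map_one]
        _ ≤ 1 := by
            rw [ContinuousLinearMap.one_def]; exact ContinuousLinearMap.norm_id_le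
    · exact norm_pow_le' M h
  have hbound : ∀ k, ‖f k‖ ≤ (‖M‖ ^ 2) ^ k := by
    intro k
    calc ‖M ^ k * (M ^ k)ᵀ‖ ≤ ‖M ^ k‖ * ‖(M ^ k)ᵀ‖ := Matrix.l2_opNorm_mul _ _
      _ = ‖M ^ k‖ * ‖M ^ k‖ := by
          rw [← Matrix.conjTranspose_eq_transpose_of_trivial, Matrix.l2_opNorm_conjTranspose]
      _ ≤ ‖M‖ ^ k * ‖M‖ ^ k := by
          have := hnormpow k
          have h0 : (0:ℝ) ≤ ‖M ^ k‖ := norm_nonneg _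
          nlinarith
      _ = (‖M‖ ^ 2) ^ k := by ring
  have hsum : Summable f :=
    Summable.of_norm_bounded (summable_geometric_of_lt_one hr0 hr1) hbound
  -- quadratic form
  have hq : ∀ x : Fin n → ℝ, ∀ k, x ⬝ᵥ (f k *ᵥ x) = ((M ^ k)ᵀ *ᵥ x) ⬝ᵥ ((M ^ k)ᵀ *ᵥ x) := by
    intro x k
    rw [hf]
    simp only []
    rw [← Matrix.mulVec_mulVec, Matrix.dotProduct_mulVec, ← Matrix.mulVec_transpose]
  have hqnn : ∀ x : Fin n → ℝ, ∀ k, 0 ≤ x ⬝ᵥ (f k *ᵥ x) := by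
    intro x k
    rw [hq]
    exact Finset.sum_nonneg fun i _ => mul_self_nonneg _
  have hqle : ∀ x : Fin n → ℝ, ∀ k, x ⬝ᵥ (f k *ᵥ x) ≤ (‖M‖ ^ 2) ^ k * (x ⬝ᵥ x) := by
    intro x k
    rw [hq]
    have hy := Matrix.l2_opNorm_mulVec (M ^ k)ᵀ ((EuclideanSpace.equiv (Fin n) ℝ).symm x)
    have hdot : ∀ v : Fin n → ℝ,
        v ⬝ᵥ v = ‖(EuclideanSpace.equiv (Fin n) ℝ).symm v‖ ^ 2 := by
      intro v
      rw [EuclideanSpace.norm_eq, Real.sq_sqrt (Finset.sum_nonneg fun i _ => sq_nonneg _)]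
      simp [dotProduct, sq]
    rw [hdot, hdot]
    have hT : ‖(M ^ k)ᵀ‖ = ‖M ^ k‖ := by
      rw [← Matrix.conjTranspose_eq_transpose_of_trivial, Matrix.l2_opNorm_conjTranspose]
    have h1 : ‖(EuclideanSpace.equiv (Fin n) ℝ).symm ((M ^ k)ᵀ *ᵥ x)‖ ≤
        ‖M‖ ^ k * ‖(EuclideanSpace.equiv (Fin n) ℝ).symm x‖ := by
      calc ‖(EuclideanSpace.equiv (Fin n) ℝ).symm ((M ^ k)ᵀ *ᵥ x)‖ ≤
          ‖(M ^ k)ᵀ‖ * ‖(EuclideanSpace.equiv (Fin n) ℝ).symm x‖ := by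
            simpa using hy
        _ ≤ ‖M‖ ^ k * ‖(EuclideanSpace.equiv (Fin n) ℝ).symm x‖ := by
            rw [hT]; gcongr; exact hnormpow k
    have h0 : (0:ℝ) ≤ ‖(EuclideanSpace.equiv (Fin n) ℝ).symm ((M ^ k)ᵀ *ᵥ x)‖ :=
      norm_nonneg _
    have h2 : (0:ℝ) ≤ ‖M‖ ^ k * ‖(EuclideanSpace.equiv (Fin n) ℝ).symm x‖ := by positivity
    calc ‖(EuclideanSpace.equiv (Fin n) ℝ).symm ((M ^ k)ᵀ *ᵥ x)‖ ^ 2 ≤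
        (‖M‖ ^ k * ‖(EuclideanSpace.equiv (Fin n) ℝ).symm x‖) ^ 2 := by
          exact pow_le_pow_left₀ h0 h1 2
      _ = (‖M‖ ^ 2) ^ k * ‖(EuclideanSpace.equiv (Fin n) ℝ).symm x‖ ^ 2 := by ring
  -- quadratic form commutes with tsum
  have hkey : ∀ x : Fin n → ℝ,
      (x ⬝ᵥ ((∑' k, f k) *ᵥ x) = ∑' k, x ⬝ᵥ (f k *ᵥ x)) ∧ Summable (fun k => x ⬝ᵥ (f k *ᵥ x)) := by
    intro x
    let L : Matrix (Fin n) (Fin n) ℝ →ₗ[ℝ] ℝ :=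
      { toFun := fun A => x ⬝ᵥ (A *ᵥ x)
        map_add' := fun A B => by simp [Matrix.add_mulVec, dotProduct_add]
        map_smul' := fun c A => by simp [Matrix.smul_mulVec, dotProduct_smul] }
    have hL := (LinearMap.toContinuousLinearMap L).map_tsum hsum
    refine ⟨hL, ?_⟩
    exact hsum.map (LinearMap.toContinuousLinearMap L)
      (LinearMap.toContinuousLinearMap L).continuous
  -- Hermitian
  have hherm : (∑' k, f k).IsHermitian := by
    have : (∑' k, f k)ᵀ = ∑' k, (f k)ᵀ := by
      have hT := (LinearMap.toContinuousLinearMap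
        ((Matrix.transposeLinearEquiv (Fin n) (Fin n) ℝ ℝ) :
          Matrix (Fin n) (Fin n) ℝ →ₗ[ℝ] Matrix (Fin n) (Fin n) ℝ)).map_tsum hsum
      simpa using hT
    unfold Matrix.IsHermitian
    rw [Matrix.conjTranspose_eq_transpose_of_trivial, this]
    congr 1
    funext k
    rw [hf]
    simp [Matrix.transpose_mul]
  constructor
  · refine Matrix.PosSemidef.of_dotProduct_mulVec_nonneg (Matrix.IsHermitian.sub hherm Matrix.isHermitian_one) (fun x => ?_)
    rw [star_trivial]
    rw [Matrix.sub_mulVec, dotProduct_sub, Matrix.one_mulVec]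
    obtain ⟨heq, hsq⟩ := hkey x
    rw [heq]
    have h0 : x ⬝ᵥ (f 0 *ᵥ x) = x ⬝ᵥ x := by
      rw [hf]; simp [Matrix.one_mulVec]
    have := Summable.le_tsum hsq 0 (fun k _ => hqnn x k)
    rw [h0] at this
    linarith
  · refine Matrix.PosSemidef.of_dotProduct_mulVec_nonneg (Matrix.IsHermitian.sub (by
      unfold Matrix.IsHermitian
      rw [Matrix.conjTranspose_smul]
      simp) hherm) (fun x => ?_)
    rw [star_trivial]
    rw [Matrix.sub_mulVec, dotProduct_sub, Matrix.smul_mulVec, Matrix.one_mulVec,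
      dotProduct_smul]
    obtain ⟨heq, hsq⟩ := hkey x
    rw [heq]
    have hsum2 : Summable (fun k : ℕ => (‖M‖ ^ 2) ^ k * (x ⬝ᵥ x)) :=
      (summable_geometric_of_lt_one hr0 hr1).mul_right _
    have hle : (∑' k, x ⬝ᵥ (f k *ᵥ x)) ≤ ∑' k : ℕ, (‖M‖ ^ 2) ^ k * (x ⬝ᵥ x) :=
      Summable.tsum_le_tsum (fun k => hqle x k) hsq hsum2
    have hgeo : (∑' k : ℕ, (‖M‖ ^ 2) ^ k * (x ⬝ᵥ x)) = (1 - ‖M‖ ^ 2)⁻¹ * (x ⬝ᵥ x) := by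
      rw [tsum_mul_right, tsum_geometric_of_lt_one hr0 hr1]
    have : (1 / (1 - ‖M‖ ^ 2)) * (x ⬝ᵥ x) = (1 - ‖M‖ ^ 2)⁻¹ * (x ⬝ᵥ x) := by
      rw [one_div]
    simp only [smul_eq_mul]
    rw [this]
    linarith [hle, hgeo.ge, hgeo.le]
end
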